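/- Let m > 0, p ≥ 2 and ρ̄ > 0, and set q := 2(m + p − 2)/(m + p − 1). For ξ ≥ ρ̄ define Θ_{Φ,p}(ξ) := ∫_{ρ̄}^{ξ} (x − ρ̄)^{(p−2)/2} (m x^{m−1})^{1/2} dx and Θ_{σ,p}(ξ) := (m/2) ∫_{ρ̄}^{ξ} (x − ρ̄)^{p−2} x^{m−1} dx. Then q ∈ (0,2), and there exists a constant c ∈ (0,∞), depending only on m, p and ρ̄, such that for every ξ ≥ ρ̄: (ξ − ρ̄)^{p−2} ξ^m + Θ_{σ,p}(ξ) ≤ c ( 1 + Θ_{Φ,p}(ξ)^q ). -/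

import Mathlib

open MeasureTheory

set_option maxHeartbeats 1600000 in
/-- In the model case `Φ(ξ) = ξ^m`, `σ(ξ) = ξ^{m/2}`, with
`q = 2(m+p-2)/(m+p-1)`, one has `q ∈ (0,2)` and there is a constant
`c > 0`, depending only on `m`, `p`, `ρ̄`, with
`(ξ-ρ̄)^{p-2} ξ^m + Θ_{σ,p}(ξ) ≤ c(1 + Θ_{Φ,p}(ξ)^q)` for all `ξ ≥ ρ̄`. -/
theorem theta_phi_domination
    (m p ρ : ℝ) (hm : 0 < m) (hp : 2 ≤ p) (hρ : 0 < ρ) :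
    (0 < 2 * (m + p - 2) / (m + p - 1) ∧ 2 * (m + p - 2) / (m + p - 1) < 2) ∧
    ∃ c : ℝ, 0 < c ∧ ∀ ξ : ℝ, ρ ≤ ξ →
      (ξ - ρ) ^ (p - 2) * ξ ^ m
          + (m / 2) * (∫ x in ρ..ξ, (x - ρ) ^ (p - 2) * x ^ (m - 1))
        ≤ c * (1 +
            (∫ x in ρ..ξ, (x - ρ) ^ ((p - 2) / 2) * (m * x ^ (m - 1)) ^ ((1 : ℝ) / 2))
              ^ (2 * (m + p - 2) / (m + p - 1))) := by
  have hp2 : (0:ℝ) ≤ p - 2 := by linarith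
  have hmp1 : (0:ℝ) < m + p - 1 := by linarith
  have hmp2 : (0:ℝ) < m + p - 2 := by linarith
  obtain ⟨q, hqdef⟩ : ∃ q : ℝ, q = 2 * (m + p - 2) / (m + p - 1) := ⟨_, rfl⟩
  rw [← hqdef]
  have hq0 : 0 < q := hqdef ▸ div_pos (by linarith) hmp1
  refine ⟨⟨hq0, by rw [hqdef, div_lt_iff₀ hmp1]; linarith⟩, ?_⟩
  -- constants
  obtain ⟨κ, hκ0, hκ34, hκ1⟩ :
      ∃ κ : ℝ, 0 < κ ∧ κ ≤ (3/4 : ℝ) ^ (m-1) ∧ κ ≤ 1 :=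
    ⟨min ((3/4 : ℝ) ^ (m-1)) 1,
      lt_min (Real.rpow_pos_of_pos (by norm_num) _) one_pos,
      min_le_left _ _, min_le_right _ _⟩
  obtain ⟨C₀, hC₀def⟩ :
      ∃ C₀ : ℝ, C₀ = (1/4 : ℝ) * (1/4 : ℝ) ^ ((p-2)/2) * (m * κ) ^ ((1:ℝ)/2) :=
    ⟨_, rfl⟩
  have hC₀ : 0 < C₀ := by
    rw [hC₀def]
    have h1 : (0:ℝ) < (1/4 : ℝ) ^ ((p-2)/2) := Real.rpow_pos_of_pos (by norm_num) _
    have h2 : (0:ℝ) < (m * κ) ^ ((1:ℝ)/2) := Real.rpow_pos_of_pos (by positivity) _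
    positivity
  have hC₀q : 0 < C₀ ^ q := Real.rpow_pos_of_pos hC₀ _
  obtain ⟨A, hAdef⟩ : ∃ A : ℝ, A = (3/2) * (2*ρ) ^ (m+p-2) := ⟨_, rfl⟩
  have hA0 : 0 < A := by
    rw [hAdef]
    have h1 : (0:ℝ) < (2*ρ) ^ (m+p-2) := Real.rpow_pos_of_pos (by linarith) _
    positivity
  obtain ⟨D, hDdef⟩ : ∃ D : ℝ, D = (3/2) / C₀ ^ q := ⟨_, rfl⟩
  have hD0 : 0 < D := by rw [hDdef]; positivity
  obtain ⟨c, hcdef⟩ : ∃ c : ℝ, c = max A D + 1 := ⟨_, rfl⟩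
  have hc0 : 0 < c := by
    have := le_max_left A D
    rw [hcdef]; linarith
  have hAc : A ≤ c := by have := le_max_left A D; rw [hcdef]; linarith
  have hDc : D ≤ c := by have := le_max_right A D; rw [hcdef]; linarith
  refine ⟨c, hc0, fun ξ hξ => ?_⟩
  have hξ0 : 0 < ξ := lt_of_lt_of_le hρ hξ
  obtain ⟨G, hGdef⟩ :
      ∃ G : ℝ, G = ∫ x in ρ..ξ, (x - ρ) ^ ((p-2)/2) * (m * x ^ (m-1)) ^ ((1:ℝ)/2) :=
    ⟨_, rfl⟩
  rw [show (∫ x in ρ..ξ, (x - ρ) ^ ((p - 2) / 2) * (m * x ^ (m - 1)) ^ ((1:ℝ) / 2)) = G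
    from hGdef.symm]
  have huIcc : Set.uIcc ρ ξ = Set.Icc ρ ξ := Set.uIcc_of_le hξ
  -- continuity / integrability of the integrands
  have hcontx : ContinuousOn (fun x : ℝ => x ^ (m-1)) (Set.uIcc ρ ξ) := by
    intro x hx
    rw [huIcc] at hx
    exact (Real.continuousAt_rpow_const x (m-1)
      (Or.inl (by linarith [hx.1]))).continuousWithinAt
  have hcontsub : ∀ e : ℝ, 0 ≤ e →
      ContinuousOn (fun x : ℝ => (x - ρ) ^ e) (Set.uIcc ρ ξ) :=
    fun e he => ((Real.continuous_rpow_const he).comp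
      (continuous_id.sub continuous_const)).continuousOn
  have hInt1 : IntervalIntegrable (fun x : ℝ => (x - ρ) ^ (p-2) * x ^ (m-1))
      volume ρ ξ := ((hcontsub _ hp2).mul hcontx).intervalIntegrable
  have hInt2 : IntervalIntegrable (fun x : ℝ => ξ ^ (p-2) * x ^ (m-1))
      volume ρ ξ := (continuousOn_const.mul hcontx).intervalIntegrable
  have hIntG : IntervalIntegrable
      (fun x : ℝ => (x - ρ) ^ ((p-2)/2) * (m * x ^ (m-1)) ^ ((1:ℝ)/2)) volume ρ ξ := by
    refine ((hcontsub _ (by linarith)).mul ?_).intervalIntegrable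
    exact (Real.continuous_rpow_const (by norm_num)).comp_continuousOn
      (continuousOn_const.mul hcontx)
  have hG0 : 0 ≤ G := by
    rw [hGdef]
    refine intervalIntegral.integral_nonneg hξ fun x hx => ?_
    exact mul_nonneg (Real.rpow_nonneg (by linarith [hx.1]) _)
      (Real.rpow_nonneg (mul_nonneg hm.le
        (Real.rpow_nonneg (le_trans hρ.le hx.1) _)) _)
  have hGq0 : 0 ≤ G ^ q := Real.rpow_nonneg hG0 q
  -- upper bound on the left-hand side
  have hintx : (∫ x in ρ..ξ, x ^ (m-1)) = (ξ ^ m - ρ ^ m) / m := by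
    rw [integral_rpow (Or.inl (by linarith : (-1:ℝ) < m - 1))]
    rw [show m - 1 + 1 = m by ring]
  have hI1 : (∫ x in ρ..ξ, (x - ρ) ^ (p-2) * x ^ (m-1))
      ≤ ξ ^ (p-2) * ((ξ ^ m - ρ ^ m) / m) := by
    calc (∫ x in ρ..ξ, (x - ρ) ^ (p-2) * x ^ (m-1))
        ≤ ∫ x in ρ..ξ, ξ ^ (p-2) * x ^ (m-1) := by
          refine intervalIntegral.integral_mono_on hξ hInt1 hInt2 fun x hx => ?_
          refine mul_le_mul_of_nonneg_right ?_
            (Real.rpow_nonneg (le_trans hρ.le hx.1) _)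
          exact Real.rpow_le_rpow (by linarith [hx.1]) (by linarith [hx.2]) hp2
      _ = ξ ^ (p-2) * ∫ x in ρ..ξ, x ^ (m-1) := intervalIntegral.integral_const_mul _ _
      _ = ξ ^ (p-2) * ((ξ ^ m - ρ ^ m) / m) := by rw [hintx]
  have hξp : (0:ℝ) ≤ ξ ^ (p-2) := Real.rpow_nonneg hξ0.le _
  have hρm : (0:ℝ) ≤ ρ ^ m := Real.rpow_nonneg hρ.le m
  have hI2 : (m/2) * (∫ x in ρ..ξ, (x - ρ) ^ (p-2) * x ^ (m-1))
      ≤ (1/2) * (ξ ^ (p-2) * ξ ^ m) := by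
    have h := mul_le_mul_of_nonneg_left hI1 (by linarith : (0:ℝ) ≤ m/2)
    have heq : (m/2) * (ξ ^ (p-2) * ((ξ ^ m - ρ ^ m) / m))
        = (1/2) * (ξ ^ (p-2) * (ξ ^ m - ρ ^ m)) := by
      field_simp
    nlinarith [mul_nonneg hξp hρm]
  have hfirst : (ξ - ρ) ^ (p-2) * ξ ^ m ≤ ξ ^ (p-2) * ξ ^ m := by
    refine mul_le_mul_of_nonneg_right ?_ (Real.rpow_nonneg hξ0.le m)
    exact Real.rpow_le_rpow (by linarith) (by linarith) hp2
  have hmul : ξ ^ (p-2) * ξ ^ m = ξ ^ (m+p-2) := by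
    rw [← Real.rpow_add hξ0]
    congr 1
    ring
  have key1 : (ξ - ρ) ^ (p-2) * ξ ^ m
      + (m/2) * (∫ x in ρ..ξ, (x - ρ) ^ (p-2) * x ^ (m-1))
      ≤ (3/2) * ξ ^ (m+p-2) := by
    calc (ξ - ρ) ^ (p-2) * ξ ^ m
        + (m/2) * (∫ x in ρ..ξ, (x - ρ) ^ (p-2) * x ^ (m-1))
        ≤ ξ ^ (p-2) * ξ ^ m + (1/2) * (ξ ^ (p-2) * ξ ^ m) := by linarith
      _ = (3/2) * ξ ^ (m+p-2) := by rw [hmul]; ring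
  rcases le_or_gt ξ (2*ρ) with hcase | hcase
  · -- small ξ : use the constant 1 on the right-hand side
    have hξA : (3/2) * ξ ^ (m+p-2) ≤ A := by
      have := Real.rpow_le_rpow hξ0.le hcase hmp2.le
      rw [hAdef]; linarith
    have hcG : 0 ≤ c * G ^ q := mul_nonneg hc0.le hGq0
    have hcc : c * (1 + G ^ q) = c + c * G ^ q := by ring
    rw [hcc]
    linarith
  · -- large ξ : lower bound for G
    have hρa : ρ ≤ (3/4) * ξ := by linarith
    have haξ : (3/4) * ξ ≤ ξ := by linarith
    have hIntG2 : IntervalIntegrable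
        (fun x : ℝ => (x - ρ) ^ ((p-2)/2) * (m * x ^ (m-1)) ^ ((1:ℝ)/2))
        volume ((3/4) * ξ) ξ :=
      hIntG.mono_set (Set.uIcc_subset_uIcc
        (by rw [huIcc]; exact ⟨hρa, haξ⟩) (by rw [huIcc]; exact ⟨hξ, le_refl ξ⟩))
    have hIntG1 : IntervalIntegrable
        (fun x : ℝ => (x - ρ) ^ ((p-2)/2) * (m * x ^ (m-1)) ^ ((1:ℝ)/2))
        volume ρ ((3/4) * ξ) :=
      hIntG.mono_set (Set.uIcc_subset_uIcc
        (by rw [huIcc]; exact ⟨le_refl ρ, hξ⟩) (by rw [huIcc]; exact ⟨hρa, haξ⟩))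
    have hsplit : (∫ x in ρ..((3/4) * ξ), (x - ρ) ^ ((p-2)/2) * (m * x ^ (m-1)) ^ ((1:ℝ)/2))
        + (∫ x in ((3/4) * ξ)..ξ, (x - ρ) ^ ((p-2)/2) * (m * x ^ (m-1)) ^ ((1:ℝ)/2)) = G := by
      rw [hGdef]
      exact intervalIntegral.integral_add_adjacent_intervals hIntG1 hIntG2
    have hpos1 :
        0 ≤ ∫ x in ρ..((3/4) * ξ), (x - ρ) ^ ((p-2)/2) * (m * x ^ (m-1)) ^ ((1:ℝ)/2) := by
      refine intervalIntegral.integral_nonneg hρa fun x hx => ?_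
      exact mul_nonneg (Real.rpow_nonneg (by linarith [hx.1]) _)
        (Real.rpow_nonneg (mul_nonneg hm.le
          (Real.rpow_nonneg (le_trans hρ.le hx.1) _)) _)
    obtain ⟨K, hKdef⟩ :
        ∃ K : ℝ, K = (ξ/4) ^ ((p-2)/2) * (m * (κ * ξ ^ (m-1))) ^ ((1:ℝ)/2) := ⟨_, rfl⟩
    have hKξ : (0:ℝ) < m * (κ * ξ ^ (m-1)) := by
      have h1 := Real.rpow_pos_of_pos hξ0 (m-1)
      positivity
    have hlow2 : (ξ/4) * K
        ≤ ∫ x in ((3/4) * ξ)..ξ, (x - ρ) ^ ((p-2)/2) * (m * x ^ (m-1)) ^ ((1:ℝ)/2) := by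
      have hconst : (∫ _ in ((3/4) * ξ)..ξ, K) = (ξ - (3/4) * ξ) * K := by
        rw [intervalIntegral.integral_const, smul_eq_mul]
      have hmono : (∫ _ in ((3/4) * ξ)..ξ, K)
          ≤ ∫ x in ((3/4) * ξ)..ξ, (x - ρ) ^ ((p-2)/2) * (m * x ^ (m-1)) ^ ((1:ℝ)/2) := by
        refine intervalIntegral.integral_mono_on haξ intervalIntegrable_const hIntG2
          fun x hx => ?_
        have hx1 : (3/4) * ξ ≤ x := hx.1
        have hx0 : 0 < x := by linarith
        have e1 : (ξ/4) ^ ((p-2)/2) ≤ (x - ρ) ^ ((p-2)/2) :=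
          Real.rpow_le_rpow (by linarith) (by linarith) (by linarith)
        have e2 : κ * ξ ^ (m-1) ≤ x ^ (m-1) := by
          rcases le_or_gt 1 m with hm1 | hm1
          · calc κ * ξ ^ (m-1) ≤ (3/4:ℝ) ^ (m-1) * ξ ^ (m-1) :=
                  mul_le_mul_of_nonneg_right hκ34 (Real.rpow_nonneg hξ0.le _)
              _ = ((3/4) * ξ) ^ (m-1) :=
                  (Real.mul_rpow (by norm_num) hξ0.le).symm
              _ ≤ x ^ (m-1) := Real.rpow_le_rpow (by linarith) hx1 (by linarith)
          · calc κ * ξ ^ (m-1) ≤ 1 * ξ ^ (m-1) :=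
                  mul_le_mul_of_nonneg_right hκ1 (Real.rpow_nonneg hξ0.le _)
              _ = ξ ^ (m-1) := one_mul _
              _ ≤ x ^ (m-1) :=
                  Real.rpow_le_rpow_of_nonpos hx0 hx.2 (by linarith)
        have e3 : (m * (κ * ξ ^ (m-1))) ^ ((1:ℝ)/2) ≤ (m * x ^ (m-1)) ^ ((1:ℝ)/2) :=
          Real.rpow_le_rpow hKξ.le (mul_le_mul_of_nonneg_left e2 hm.le) (by norm_num)
        rw [hKdef]
        exact mul_le_mul e1 e3 (Real.rpow_nonneg hKξ.le _)
          (Real.rpow_nonneg (by linarith) _)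
      calc (ξ/4) * K = (ξ - (3/4) * ξ) * K := by ring
        _ = ∫ _ in ((3/4) * ξ)..ξ, K := hconst.symm
        _ ≤ _ := hmono
    have hGlow' : (ξ/4) * K ≤ G := by linarith
    -- rewrite (ξ/4) * K as C₀ * ξ^((m+p-1)/2)
    have f1 : (ξ/4) ^ ((p-2)/2) = (1/4:ℝ) ^ ((p-2)/2) * ξ ^ ((p-2)/2) := by
      rw [show (ξ/4:ℝ) = (1/4) * ξ by ring, Real.mul_rpow (by norm_num) hξ0.le]
    have f2 : (m * (κ * ξ ^ (m-1))) ^ ((1:ℝ)/2)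
        = (m * κ) ^ ((1:ℝ)/2) * ξ ^ ((m-1) * ((1:ℝ)/2)) := by
      rw [show m * (κ * ξ ^ (m-1)) = (m * κ) * ξ ^ (m-1) by ring,
        Real.mul_rpow (by positivity) (Real.rpow_nonneg hξ0.le _),
        ← Real.rpow_mul hξ0.le]
    have f3 : ξ * (ξ ^ ((p-2)/2) * ξ ^ ((m-1) * ((1:ℝ)/2))) = ξ ^ ((m+p-1)/2) := by
      nth_rewrite 1 [← Real.rpow_one ξ]
      rw [← Real.rpow_add hξ0, ← Real.rpow_add hξ0]
      congr 1
      ring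
    have halg : (ξ/4) * K = C₀ * ξ ^ ((m+p-1)/2) := by
      rw [hKdef, f1, f2, hC₀def, ← f3]
      ring
    have hGlow : C₀ * ξ ^ ((m+p-1)/2) ≤ G := by rw [← halg]; exact hGlow'
    have hsq : (m+p-1)/2 * q = m + p - 2 := by
      rw [hqdef]
      field_simp
    have hGq : C₀ ^ q * ξ ^ (m+p-2) ≤ G ^ q := by
      have h1 : (C₀ * ξ ^ ((m+p-1)/2)) ^ q ≤ G ^ q := by
        refine Real.rpow_le_rpow ?_ hGlow hq0.le
        exact mul_nonneg hC₀.le (Real.rpow_nonneg hξ0.le _)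
      rwa [Real.mul_rpow hC₀.le (Real.rpow_nonneg hξ0.le _),
        ← Real.rpow_mul hξ0.le, hsq] at h1
    have hXnn : (0:ℝ) ≤ ξ ^ (m+p-2) := Real.rpow_nonneg hξ0.le _
    calc (ξ - ρ) ^ (p-2) * ξ ^ m
        + (m/2) * (∫ x in ρ..ξ, (x - ρ) ^ (p-2) * x ^ (m-1))
        ≤ (3/2) * ξ ^ (m+p-2) := key1
      _ = D * (C₀ ^ q * ξ ^ (m+p-2)) := by
          rw [hDdef]
          field_simp
      _ ≤ D * G ^ q := mul_le_mul_of_nonneg_left hGq hD0.le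
      _ ≤ c * G ^ q := mul_le_mul_of_nonneg_right hDc hGq0
      _ ≤ c * (1 + G ^ q) := mul_le_mul_of_nonneg_left (by linarith) hc0.le
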